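/- Let H be a Hilbert space and u, v ∈ B(H) isometries with u·v = λ·v·u for a unimodular λ. Let H₀ := {ξ ∈ H : for all n > 0 there exists ξ_n with ξ = (uv)ⁿ ξ_n}. Then H₀ is a closed subspace of H, u(H₀) = H₀ and v(H₀) = H₀; in particular the restrictions of u and v to H₀ are unitaries on H₀. -/

import Mathlib

/-- For isometries `u, v` on a Hilbert space with `u v = λ • (v u)`, `λ` unimodular, the set
`H₀ = {ξ | ∀ n > 0, ∃ ξₙ, ξ = (uv)ⁿ ξₙ}` is a closed subspace with `u(H₀) = H₀` and
`v(H₀) = H₀`; in particular the restrictions of `u` and `v` to `H₀` are unitaries. -/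
theorem stmt_16 {H : Type*} [NormedAddCommGroup H] [InnerProductSpace ℂ H] [CompleteSpace H]
    (u v : H →L[ℂ] H) (hu : star u * u = 1) (hv : star v * v = 1)
    (l : ℂ) (hl : ‖l‖ = 1) (huv : u * v = l • (v * u))
    (H0 : Set H)
    (hH0 : H0 = {ξ : H | ∀ n : ℕ, 0 < n → ∃ ξn : H, ξ = ((u * v) ^ n) ξn}) :
    IsClosed H0 ∧ (∃ K : Submodule ℂ H, (K : Set H) = H0) ∧
      u '' H0 = H0 ∧ v '' H0 = H0 := by
  have hl0 : l ≠ 0 := by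
    intro h; rw [h] at hl; simp at hl
  set w : H →L[ℂ] H := u * v with hw
  -- norm preservation
  have hiso : ∀ (A : H →L[ℂ] H), star A * A = 1 → ∀ x : H, ‖A x‖ = ‖x‖ := by
    intro A hA x
    have h1 : (inner ℂ (A x) (A x) : ℂ) = inner ℂ x x := by
      rw [← ContinuousLinearMap.adjoint_inner_left, ← ContinuousLinearMap.star_eq_adjoint]
      have : (star A * A) x = x := by rw [hA]; simp
      rw [← ContinuousLinearMap.comp_apply, ← ContinuousLinearMap.mul_def, this]
    rw [inner_self_eq_norm_sq_to_K (𝕜 := ℂ), inner_self_eq_norm_sq_to_K (𝕜 := ℂ)] at h1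
    have h2 : (‖A x‖ : ℝ) ^ 2 = (‖x‖ : ℝ) ^ 2 := by exact_mod_cast h1
    nlinarith [norm_nonneg (A x), norm_nonneg x]
  have hwiso : star w * w = 1 := by
    rw [hw, star_mul, mul_assoc, ← mul_assoc (star u) u v, hu, one_mul, hv]
  have huinj : Function.Injective u := by
    intro x y hxy
    have hx := congrArg (fun A : H →L[ℂ] H => A x) hu
    have hy := congrArg (fun A : H →L[ℂ] H => A y) hu
    simp only [ContinuousLinearMap.mul_apply, ContinuousLinearMap.one_apply] at hx hy
    rw [← hx, ← hy, hxy]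
  have hvinj : Function.Injective v := by
    intro x y hxy
    have hx := congrArg (fun A : H →L[ℂ] H => A x) hv
    have hy := congrArg (fun A : H →L[ℂ] H => A y) hv
    simp only [ContinuousLinearMap.mul_apply, ContinuousLinearMap.one_apply] at hx hy
    rw [← hx, ← hy, hxy]
  -- commutation relations
  have hvu : v * u = l⁻¹ • w := by
    rw [huv, smul_smul, inv_mul_cancel₀ hl0, one_smul]
  have huw : u * w = l • (w * u) := by
    conv_lhs => rw [huv]
    rw [mul_smul_comm, ← mul_assoc, ← hw]
  have hvw : v * w = l⁻¹ • (w * v) := by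
    conv_lhs => rw [hw]
    rw [← mul_assoc, hvu, smul_mul_assoc]
  have huwn : ∀ n : ℕ, u * w ^ n = l ^ n • (w ^ n * u) := by
    intro n
    induction n with
    | zero => simp
    | succ n ih =>
      rw [pow_succ', ← mul_assoc, huw, smul_mul_assoc, mul_assoc, ih, mul_smul_comm,
        smul_smul, ← pow_succ', ← mul_assoc, ← pow_succ']
  have hvwn : ∀ n : ℕ, v * w ^ n = (l⁻¹) ^ n • (w ^ n * v) := by
    intro n
    induction n with
    | zero => simp
    | succ n ih =>
      rw [pow_succ', ← mul_assoc, hvw, smul_mul_assoc, mul_assoc, ih, mul_smul_comm,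
        smul_smul, ← pow_succ', ← mul_assoc, ← pow_succ']
  have hwn_iso : ∀ n : ℕ, ∀ x : H, ‖(w ^ n) x‖ = ‖x‖ := by
    intro n
    induction n with
    | zero => simp
    | succ n ih =>
      intro x
      rw [pow_succ', ContinuousLinearMap.mul_apply, hiso w hwiso, ih]
  -- membership reformulation
  have hmem : ∀ ξ : H, ξ ∈ H0 ↔ ∀ n : ℕ, ∃ η : H, ξ = (w ^ n) η := by
    intro ξ
    rw [hH0]
    constructor
    · intro h n
      rcases Nat.eq_zero_or_pos n with rfl | hn
      · exact ⟨ξ, by simp⟩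
      · exact h n hn
    · intro h n _; exact h n
  refine ⟨?_, ?_, ?_, ?_⟩
  · -- closed
    have : H0 = ⋂ n : ℕ, Set.range (w ^ n) := by
      ext ξ
      simp only [Set.mem_iInter, Set.mem_range, hmem, eq_comm]
    rw [this]
    refine isClosed_iInter fun n => ?_
    have : Isometry (w ^ n) :=
      AddMonoidHomClass.isometry_of_norm _ (hwn_iso n)
    exact this.isClosedEmbedding.isClosed_range
  · -- submodule
    refine ⟨⨅ n : ℕ, LinearMap.range ((w ^ n : H →L[ℂ] H) : H →ₗ[ℂ] H), ?_⟩
    ext ξ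
    simp only [SetLike.mem_coe, Submodule.mem_iInf, LinearMap.mem_range,
      ContinuousLinearMap.coe_coe, hmem, eq_comm]
  · -- u '' H0 = H0
    apply Set.Subset.antisymm
    · rintro _ ⟨ξ, hξ, rfl⟩
      rw [hmem] at hξ ⊢
      intro n
      obtain ⟨η, rfl⟩ := hξ n
      refine ⟨l ^ n • u η, ?_⟩
      have := congrArg (fun A : H →L[ℂ] H => A η) (huwn n)
      simpa [mul_smul_comm] using this
    · intro ξ hξ
      rw [hmem] at hξ
      obtain ⟨ξ₁, hξ₁⟩ := hξ 1
      refine ⟨v ξ₁, ?_, ?_⟩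
      · rw [hmem]
        intro n
        obtain ⟨ζ, hζ⟩ := hξ (n + 1)
        have h1 : u (v ξ₁) = u (v ((w ^ n) ζ)) := by
          have : ((w ^ (n+1)) ζ : H) = u (v ((w ^ n) ζ)) := by
            rw [pow_succ']
            simp [hw]
          rw [← this, ← hζ, hξ₁]
          simp [hw, pow_one]
        have h2 : v ξ₁ = v ((w ^ n) ζ) := huinj h1
        refine ⟨(l⁻¹) ^ n • v ζ, ?_⟩
        have := congrArg (fun A : H →L[ℂ] H => A ζ) (hvwn n)
        simp only [ContinuousLinearMap.mul_apply, ContinuousLinearMap.smul_apply] at this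
        rw [h2, this, map_smul]
      · rw [hξ₁]; simp [hw, pow_one]
  · -- v '' H0 = H0
    apply Set.Subset.antisymm
    · rintro _ ⟨ξ, hξ, rfl⟩
      rw [hmem] at hξ ⊢
      intro n
      obtain ⟨η, rfl⟩ := hξ n
      refine ⟨(l⁻¹) ^ n • v η, ?_⟩
      have := congrArg (fun A : H →L[ℂ] H => A η) (hvwn n)
      simpa [mul_smul_comm] using this
    · intro ξ hξ
      rw [hmem] at hξ
      obtain ⟨ξ₁, hξ₁⟩ := hξ 1
      have hkey : ξ = v (l • u ξ₁) := by
        have := congrArg (fun A : H →L[ℂ] H => A ξ₁) huv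
        simp only [ContinuousLinearMap.mul_apply, ContinuousLinearMap.smul_apply] at this
        rw [hξ₁, pow_one, hw]
        simp only [ContinuousLinearMap.mul_apply]
        rw [show (u (v ξ₁) : H) = l • v (u ξ₁) from this, map_smul]
      refine ⟨l • u ξ₁, ?_, hkey.symm⟩
      rw [hmem]
      intro n
      obtain ⟨ζ, hζ⟩ := hξ (n + 1)
      have h1 : v (l • u ξ₁) = v (l • u ((w ^ n) ζ)) := by
        have := congrArg (fun A : H →L[ℂ] H => A ((w ^ n) ζ)) huv
        simp only [ContinuousLinearMap.mul_apply, ContinuousLinearMap.smul_apply] at this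
        rw [← hkey, hζ, pow_succ']
        simp only [ContinuousLinearMap.mul_apply, map_smul]
        rw [hw]
        simp only [ContinuousLinearMap.mul_apply]
        rw [show (u (v ((w^n) ζ)) : H) = l • v (u ((w^n) ζ)) from this]
      have h2 : (l • u ξ₁ : H) = l • u ((w ^ n) ζ) := hvinj h1
      refine ⟨(l ^ (n+1)) • u ζ, ?_⟩
      have := congrArg (fun A : H →L[ℂ] H => A ζ) (huwn n)
      simp only [ContinuousLinearMap.mul_apply, ContinuousLinearMap.smul_apply] at this
      rw [h2, this, map_smul, smul_smul, ← pow_succ']
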